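/- arXiv:0910.5002 — 5 statements merged into one kernel-verified Lean document; each statement's English description precedes it below -/
import Mathlib

section
/- For every integer L ≥ 1 and every (a,b) ∈ ℝ², I(a,b;L) ≥ √(a² + b²). -/
open Real

/-- The Riemannian approximation `I(a,b;L)` of `√(a² + b²)` built from the angles
`θ_k = πk/(2L)`, `k = 0, …, L−1`. -/
noncomputable def Ifun (L : ℕ) (a b : ℝ) : ℝ :=
  (∑ k ∈ Finset.range L,
      (|a * Real.cos (π * (k : ℝ) / (2 * (L : ℝ))) + b * Real.sin (π * (k : ℝ) / (2 * (L : ℝ)))| +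
       |b * Real.cos (π * (k : ℝ) / (2 * (L : ℝ))) - a * Real.sin (π * (k : ℝ) / (2 * (L : ℝ)))|)) /
  (∑ k ∈ Finset.range L,
      (Real.cos (π * (k : ℝ) / (2 * (L : ℝ))) + Real.sin (π * (k : ℝ) / (2 * (L : ℝ)))))

noncomputable def gfun (x : ℝ) : ℝ := |Real.cos x| + |Real.sin x|

noncomputable def th (L k : ℕ) : ℝ := (k : ℝ) * (π / (2 * (L : ℝ)))

noncomputable def Ssum (L : ℕ) (c : ℝ) : ℝ := ∑ k ∈ Finset.range L, gfun (th L k + c)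

lemma gfun_period (x : ℝ) : gfun (x + π / 2) = gfun x := by
  unfold gfun
  rw [Real.cos_add_pi_div_two, Real.sin_add_pi_div_two, abs_neg, add_comm]

lemma sin_step {u s d : ℝ} (hd : 0 < d) (hu : 0 ≤ u) (hud : u + d ≤ π)
    (hs0 : 0 ≤ s) (hsd : s ≤ d) :
    (1 - s / d) * Real.sin u + (s / d) * Real.sin (u + d) ≤ Real.sin (u + s) := by
  have hc := strictConcaveOn_sin_Icc.concaveOn
  have ht0 : (0:ℝ) ≤ s / d := by positivity
  have ht1 : s / d ≤ 1 := (div_le_one hd).2 hsd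
  have h := hc.2 (Set.mem_Icc.2 ⟨hu, by linarith⟩) (Set.mem_Icc.2 ⟨by linarith, hud⟩)
      (by linarith : (0:ℝ) ≤ 1 - s / d) ht0 (by ring)
  have harg : (1 - s / d) • u + (s / d) • (u + d) = u + s := by
    rw [smul_eq_mul, smul_eq_mul]
    field_simp
    ring
  rw [harg] at h
  simpa using h

lemma th_succ (L k : ℕ) : th L (k + 1) = th L k + π / (2 * (L : ℝ)) := by
  unfold th; push_cast; ring

lemma th_self {L : ℕ} (hL : 1 ≤ L) : th L L = π / 2 := by
  have hL0 : (L : ℝ) ≠ 0 := by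
    exact_mod_cast Nat.one_le_iff_ne_zero.1 hL
  unfold th
  field_simp

lemma key (L : ℕ) (hL : 1 ≤ L) {s : ℝ} (hs0 : 0 ≤ s) (hs : s ≤ π / (2 * (L : ℝ))) :
    ∑ k ∈ Finset.range L, (Real.cos (th L k) + Real.sin (th L k)) ≤
      ∑ k ∈ Finset.range L, (Real.cos (th L k + s) + Real.sin (th L k + s)) := by
  have hL0 : (0:ℝ) < L := by exact_mod_cast hL
  set d : ℝ := π / (2 * (L : ℝ)) with hdDef
  have hdpos : 0 < d := by positivity
  set t : ℝ := s / d with htDef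
  have ht0 : 0 ≤ t := by positivity
  have ht1 : t ≤ 1 := (div_le_one hdpos).2 hs
  have hterm : ∀ k ∈ Finset.range L,
      (1 - t) * (Real.cos (th L k) + Real.sin (th L k))
        + t * (Real.cos (th L (k + 1)) + Real.sin (th L (k + 1)))
      ≤ Real.cos (th L k + s) + Real.sin (th L k + s) := by
    intro k hk
    have hkL : (k : ℝ) + 1 ≤ L := by exact_mod_cast Finset.mem_range.1 hk
    have hth0 : 0 ≤ th L k := by unfold th; positivity
    have hthd : th L k + d = th L (k + 1) := (th_succ L k).symm
    have hthle : th L k + d ≤ π / 2 := by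
      rw [hthd]
      unfold th
      have hLd : (L : ℝ) * (π / (2 * (L : ℝ))) = π / 2 := by
        field_simp
      have hcast : ((k + 1 : ℕ) : ℝ) ≤ (L : ℝ) := by push_cast; linarith
      have hmul : ((k + 1 : ℕ) : ℝ) * (π / (2 * (L : ℝ))) ≤ (L : ℝ) * (π / (2 * (L : ℝ))) :=
        mul_le_mul_of_nonneg_right hcast (by positivity)
      linarith
    -- sin part
    have h1 : (1 - t) * Real.sin (th L k) + t * Real.sin (th L k + d)
        ≤ Real.sin (th L k + s) :=
      sin_step hdpos hth0 (by linarith [Real.pi_pos]) hs0 hs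
    -- cos part : cos x = sin (x + π/2)
    have h2 : (1 - t) * Real.sin (th L k + π / 2) + t * Real.sin ((th L k + π / 2) + d)
        ≤ Real.sin ((th L k + π / 2) + s) :=
      sin_step hdpos (by linarith [Real.pi_pos]) (by linarith) hs0 hs
    have e1 : Real.sin (th L k + π / 2) = Real.cos (th L k) := Real.sin_add_pi_div_two _
    have e2 : Real.sin ((th L k + π / 2) + d) = Real.cos (th L (k + 1)) := by
      rw [show (th L k + π / 2) + d = (th L k + d) + π / 2 by ring, hthd]
      exact Real.sin_add_pi_div_two _
    have e3 : Real.sin ((th L k + π / 2) + s) = Real.cos (th L k + s) := by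
      rw [show (th L k + π / 2) + s = (th L k + s) + π / 2 by ring]
      exact Real.sin_add_pi_div_two _
    rw [e1, e2, e3] at h2
    rw [hthd] at h1
    linarith
  have hsum := Finset.sum_le_sum hterm
  have hshift : ∑ k ∈ Finset.range L, (Real.cos (th L (k + 1)) + Real.sin (th L (k + 1)))
      = ∑ k ∈ Finset.range L, (Real.cos (th L k) + Real.sin (th L k)) := by
    have h1 : (∑ k ∈ Finset.range L, (Real.cos (th L (k + 1)) + Real.sin (th L (k + 1))))
          + (Real.cos (th L 0) + Real.sin (th L 0))
        = (∑ k ∈ Finset.range L, (Real.cos (th L k) + Real.sin (th L k)))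
          + (Real.cos (th L L) + Real.sin (th L L)) := by
      rw [← Finset.sum_range_succ' (fun j => Real.cos (th L j) + Real.sin (th L j)) L,
        Finset.sum_range_succ]
    have hL1 : Real.cos (th L L) + Real.sin (th L L)
        = Real.cos (th L 0) + Real.sin (th L 0) := by
      rw [th_self hL]
      simp [th]
    linarith
  have hexpand : ∑ k ∈ Finset.range L,
      ((1 - t) * (Real.cos (th L k) + Real.sin (th L k))
        + t * (Real.cos (th L (k + 1)) + Real.sin (th L (k + 1))))
      = (1 - t) * (∑ k ∈ Finset.range L, (Real.cos (th L k) + Real.sin (th L k)))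
        + t * (∑ k ∈ Finset.range L, (Real.cos (th L (k + 1)) + Real.sin (th L (k + 1)))) := by
    rw [Finset.sum_add_distrib, ← Finset.mul_sum, ← Finset.mul_sum]
  rw [hexpand, hshift] at hsum
  linarith

lemma shift_one (L : ℕ) (hL : 1 ≤ L) (x : ℝ) :
    Ssum L (x + π / (2 * (L : ℝ))) = Ssum L x := by
  unfold Ssum
  have h0 : ∀ k : ℕ, th L k + (x + π / (2 * (L : ℝ))) = th L (k + 1) + x := by
    intro k; rw [th_succ]; ring
  simp only [h0]
  have h1 : (∑ k ∈ Finset.range L, gfun (th L (k + 1) + x)) + gfun (th L 0 + x)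
      = (∑ k ∈ Finset.range L, gfun (th L k + x)) + gfun (th L L + x) := by
    rw [← Finset.sum_range_succ' (fun j => gfun (th L j + x)) L, Finset.sum_range_succ]
  have hL1 : gfun (th L L + x) = gfun (th L 0 + x) := by
    rw [th_self hL, show π / 2 + x = x + π / 2 by ring, gfun_period]
    simp [th]
  linarith

lemma shift_int (L : ℕ) (hL : 1 ≤ L) (q : ℤ) (s : ℝ) :
    Ssum L ((q : ℝ) * (π / (2 * (L : ℝ))) + s) = Ssum L s := by
  induction q using Int.induction_on with
  | zero => norm_num
  | succ n ih =>
      push_cast at ih ⊢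
      rw [show ((n : ℝ) + 1) * (π / (2 * (L : ℝ))) + s
          = ((n : ℝ) * (π / (2 * (L : ℝ))) + s) + π / (2 * (L : ℝ)) by ring,
        shift_one L hL, ih]
  | pred n ih =>
      push_cast at ih ⊢
      rw [show -(n : ℝ) * (π / (2 * (L : ℝ))) + s
          = ((-(n : ℝ) - 1) * (π / (2 * (L : ℝ))) + s) + π / (2 * (L : ℝ)) by ring,
        shift_one L hL] at ih
      rw [show (-(n : ℝ) - 1) * (π / (2 * (L : ℝ))) + s
          = ((-(n : ℝ) - 1) * (π / (2 * (L : ℝ))) + s) by ring]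
      exact ih

lemma master (L : ℕ) (hL : 1 ≤ L) (c : ℝ) :
    ∑ k ∈ Finset.range L, (Real.cos (th L k) + Real.sin (th L k)) ≤
      ∑ k ∈ Finset.range L, gfun (th L k + c) := by
  have hL0 : (0:ℝ) < L := by exact_mod_cast hL
  set d : ℝ := π / (2 * (L : ℝ)) with hdDef
  have hdpos : 0 < d := by positivity
  set q : ℤ := ⌊c / d⌋ with hq
  set s : ℝ := c - (q : ℝ) * d with hsDef
  have hq1 : (q : ℝ) ≤ c / d := Int.floor_le _
  have hq2 : c / d < (q : ℝ) + 1 := Int.lt_floor_add_one _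
  have hs0 : 0 ≤ s := by
    have := (le_div_iff₀ hdpos).1 hq1
    rw [hsDef]; linarith
  have hs1 : s < d := by
    have := (div_lt_iff₀ hdpos).1 hq2
    rw [hsDef]; nlinarith
  have hSS : ∑ k ∈ Finset.range L, gfun (th L k + c) = ∑ k ∈ Finset.range L, gfun (th L k + s) := by
    have h1 : Ssum L c = Ssum L ((q : ℝ) * d + s) := by
      rw [show (q : ℝ) * d + s = c by rw [hsDef]; ring]
    have h2 := shift_int L hL q s
    rw [← hdDef] at h2
    have : Ssum L c = Ssum L s := by rw [h1, h2]
    exact this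
  rw [hSS]
  have hgeq : ∀ k ∈ Finset.range L,
      gfun (th L k + s) = Real.cos (th L k + s) + Real.sin (th L k + s) := by
    intro k hk
    have hkL : (k : ℝ) + 1 ≤ L := by exact_mod_cast Finset.mem_range.1 hk
    have hth0 : 0 ≤ th L k := by unfold th; positivity
    have hLd : (L : ℝ) * d = π / 2 := by
      rw [hdDef]; field_simp
    have hthle : th L k + s ≤ π / 2 := by
      have hk' : th L k ≤ ((L : ℝ) - 1) * d := by
        unfold th
        rw [← hdDef]
        nlinarith
      nlinarith
    have hcos : 0 ≤ Real.cos (th L k + s) :=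
      Real.cos_nonneg_of_mem_Icc ⟨by linarith [Real.pi_pos], hthle⟩
    have hsin : 0 ≤ Real.sin (th L k + s) :=
      Real.sin_nonneg_of_nonneg_of_le_pi (by linarith) (by linarith [Real.pi_pos])
    unfold gfun
    rw [abs_of_nonneg hcos, abs_of_nonneg hsin]
  rw [Finset.sum_congr rfl hgeq]
  exact key L hL hs0 hs1.le

theorem stmt1 (L : ℕ) (hL : 1 ≤ L) (a b : ℝ) :
    Real.sqrt (a ^ 2 + b ^ 2) ≤ Ifun L a b := by
  have hL0 : (0:ℝ) < L := by exact_mod_cast hL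
  unfold Ifun
  have hang : ∀ k : ℕ, π * (k : ℝ) / (2 * (L : ℝ)) = th L k := by
    intro k; unfold th; ring
  simp only [hang]
  have hDpos : 0 < ∑ k ∈ Finset.range L, (Real.cos (th L k) + Real.sin (th L k)) := by
    apply Finset.sum_pos
    · intro k hk
      have hkL : (k : ℝ) + 1 ≤ L := by exact_mod_cast Finset.mem_range.1 hk
      have hth0 : 0 ≤ th L k := by unfold th; positivity
      have hthlt : th L k < π / 2 := by
        unfold th
        have hLd : (L : ℝ) * (π / (2 * (L : ℝ))) = π / 2 := by
          field_simp
        have hklt : (k : ℝ) < (L : ℝ) := by linarith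
        have hmul : (k : ℝ) * (π / (2 * (L : ℝ))) < (L : ℝ) * (π / (2 * (L : ℝ))) :=
          mul_lt_mul_of_pos_right hklt (by positivity)
        linarith
      have hcos : 0 < Real.cos (th L k) :=
        Real.cos_pos_of_mem_Ioo ⟨by linarith [Real.pi_pos], hthlt⟩
      have hsin : 0 ≤ Real.sin (th L k) :=
        Real.sin_nonneg_of_nonneg_of_le_pi hth0 (by linarith [Real.pi_pos])
      linarith
    · exact ⟨0, Finset.mem_range.2 hL⟩
  rw [le_div_iff₀ hDpos]
  by_cases hab : a = 0 ∧ b = 0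
  · obtain ⟨rfl, rfl⟩ := hab
    simp
  · set z : ℂ := ⟨a, b⟩ with hz
    have hzne : z ≠ 0 := by
      intro h
      apply hab
      rw [Complex.ext_iff] at h
      exact ⟨h.1, h.2⟩
    set r : ℝ := ‖z‖ with hr
    have hrpos : 0 < r := norm_pos_iff.2 hzne
    have hrs : r = Real.sqrt (a ^ 2 + b ^ 2) := by
      rw [hr, Complex.norm_def, hz, Complex.normSq_mk]
      congr 1
      ring
    set φ : ℝ := Complex.arg z with hφ
    have ha : a = r * Real.cos φ := by
      rw [hr, hφ]
      exact (Complex.norm_mul_cos_arg z).symm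
    have hb : b = r * Real.sin φ := by
      rw [hr, hφ]
      exact (Complex.norm_mul_sin_arg z).symm
    have hterm : ∀ k ∈ Finset.range L,
        |a * Real.cos (th L k) + b * Real.sin (th L k)| +
          |b * Real.cos (th L k) - a * Real.sin (th L k)| = r * gfun (th L k + (-φ)) := by
      intro k _
      have e1 : a * Real.cos (th L k) + b * Real.sin (th L k) = r * Real.cos (th L k - φ) := by
        rw [ha, hb, Real.cos_sub]; ring
      have e2 : b * Real.cos (th L k) - a * Real.sin (th L k) = r * Real.sin (φ - th L k) := by
        rw [ha, hb, Real.sin_sub]; ring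
      rw [e1, e2, abs_mul, abs_mul, abs_of_pos hrpos]
      unfold gfun
      rw [show th L k + (-φ) = th L k - φ by ring,
        show φ - th L k = -(th L k - φ) by ring, Real.sin_neg, abs_neg]
      ring
    rw [Finset.sum_congr rfl hterm, ← Finset.mul_sum, ← hrs]
    exact mul_le_mul_of_nonneg_left (master L hL (-φ)) hrpos.le
end

section
/- For every integer L ≥ 1 and every (a,b) ∈ ℝ², equality I(a,b;L) = √(a² + b²) holds if and only if there exists k with 0 ≤ k ≤ L−1 such that a·cos θ_k + b·sin θ_k = 0 or b·cos θ_k − a·sin θ_k = 0. -/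
open Real
open Finset

lemma sum_shift (L : ℕ) (G : ℤ → ℝ) (hG : ∀ n : ℤ, G (n + L) = G n) (j : ℤ) :
    ∑ k ∈ Finset.range L, G ((k : ℤ) + j) = ∑ k ∈ Finset.range L, G (k : ℤ) := by
  have step : ∀ i : ℤ, ∑ k ∈ Finset.range L, G ((k : ℤ) + (i + 1))
      = ∑ k ∈ Finset.range L, G ((k : ℤ) + i) := by
    intro i
    have h1 : ∑ k ∈ Finset.range L, G ((k : ℤ) + (i + 1))
        = ∑ k ∈ Finset.range L, (fun k : ℕ => G ((k : ℤ) + i)) (k + 1) := by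
      apply Finset.sum_congr rfl
      intro k _
      push_cast
      ring_nf
    rw [h1]
    have h2 := Finset.sum_range_succ' (fun k : ℕ => G ((k : ℤ) + i)) L
    have h3 := Finset.sum_range_succ (fun k : ℕ => G ((k : ℤ) + i)) L
    have h4 : G ((L : ℤ) + i) = G ((0 : ℤ) + i) := by
      rw [add_comm ((L : ℤ)) i, hG i]
      norm_num
    rw [h3] at h2
    push_cast at h2 h4 ⊢
    linarith [h2, h4]
  induction j using Int.induction_on with
  | zero => simp
  | succ i ih => rw [← ih, step i]
  | pred i ih =>
      have := step (-(i+1))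
      rw [show (-(i:ℤ)-1) = -(i+1) by ring, ← this,
        show -((i:ℤ)+1)+1 = -(i:ℤ) by ring]
      exact ih

lemma CS (L : ℕ) (hL : 1 ≤ L) :
    ∑ k ∈ Finset.range L, (cos ((k : ℝ) * (π / (2 * L))) - sin ((k : ℝ) * (π / (2 * L)))) = 1 := by
  set h : ℝ := π / (2 * L) with hh
  have hL0 : (L : ℝ) ≠ 0 := Nat.cast_ne_zero.mpr (by omega)
  have hLh : (L : ℝ) * h = π / 2 := by rw [hh]; field_simp
  have hS : ∑ k ∈ Finset.range L, sin ((k : ℝ) * h)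
      = ∑ k ∈ Finset.range L, cos (((k : ℝ) + 1) * h) := by
    rw [← Finset.sum_range_reflect (fun k : ℕ => sin ((k : ℝ) * h)) L]
    apply Finset.sum_congr rfl
    intro j hj
    have hjL : j < L := Finset.mem_range.mp hj
    have hcast : ((L - 1 - j : ℕ) : ℝ) = (L : ℝ) - 1 - j := by
      have : L - 1 - j = L - (1 + j) := by omega
      rw [this, Nat.cast_sub (by omega)]
      push_cast; ring
    simp only [hcast]
    have harg : ((L : ℝ) - 1 - j) * h = π / 2 - ((j : ℝ) + 1) * h := by
      rw [← hLh]; ring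
    rw [harg, Real.sin_pi_div_two_sub]
  rw [Finset.sum_sub_distrib, hS]
  have := Finset.sum_range_sub' (fun k : ℕ => cos ((k : ℝ) * h)) L
  simp only [Nat.cast_add, Nat.cast_one] at this
  rw [← Finset.sum_sub_distrib, this, Nat.cast_zero, zero_mul, Real.cos_zero, hLh,
    Real.cos_pi_div_two]
  ring

lemma sinhD (L : ℕ) (hL : 1 ≤ L) :
    sin (π / (2 * L)) * (∑ k ∈ Finset.range L, (cos ((k : ℝ) * (π / (2 * L))) + sin ((k : ℝ) * (π / (2 * L)))))
      = 1 + cos (π / (2 * L)) := by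
  set h : ℝ := π / (2 * L) with hh
  have hL0 : (L : ℝ) ≠ 0 := Nat.cast_ne_zero.mpr (by omega)
  have hLh : (L : ℝ) * h = π / 2 := by rw [hh]; field_simp
  have tel1 := Finset.sum_range_sub (fun k : ℕ => sin ((k : ℝ) * h)) L
  have tel2 := Finset.sum_range_sub' (fun k : ℕ => cos ((k : ℝ) * h)) L
  have key : ∑ k ∈ Finset.range L,
      ((sin (((k : ℝ) + 1) * h) - sin ((k : ℝ) * h)) + (cos ((k : ℝ) * h) - cos (((k : ℝ) + 1) * h)))
      = 2 := by
    rw [Finset.sum_add_distrib]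
    simp only [Nat.cast_add, Nat.cast_one] at tel1 tel2
    rw [tel1, tel2, Nat.cast_zero, zero_mul, hLh]
    norm_num
  have expand : ∀ k ∈ Finset.range L,
      (sin (((k : ℝ) + 1) * h) - sin ((k : ℝ) * h)) + (cos ((k : ℝ) * h) - cos (((k : ℝ) + 1) * h))
      = sin h * (cos ((k : ℝ) * h) + sin ((k : ℝ) * h))
        + (1 - cos h) * (cos ((k : ℝ) * h) - sin ((k : ℝ) * h)) := by
    intro k _
    have e1 : ((k : ℝ) + 1) * h = (k : ℝ) * h + h := by ring
    rw [e1, Real.sin_add, Real.cos_add]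
    ring
  rw [Finset.sum_congr rfl expand, Finset.sum_add_distrib, ← Finset.mul_sum, ← Finset.mul_sum,
    CS L hL] at key
  linarith [key]

lemma sum_f (L : ℕ) (hL : 1 ≤ L) (φ : ℝ) :
    ∑ k ∈ Finset.range L,
        (|cos ((k : ℝ) * (π / (2 * L)) - φ)| + |sin ((k : ℝ) * (π / (2 * L)) - φ)|)
      = (∑ k ∈ Finset.range L, (cos ((k : ℝ) * (π / (2 * L))) + sin ((k : ℝ) * (π / (2 * L)))))
          * cos (Int.fract (φ / (π / (2 * L))) * (π / (2 * L)))
        + sin (Int.fract (φ / (π / (2 * L))) * (π / (2 * L))) := by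
  set h : ℝ := π / (2 * L) with hh
  have hL0 : (0 : ℝ) < L := by exact_mod_cast Nat.pos_of_ne_zero (by omega)
  have hpos : 0 < h := by rw [hh]; positivity
  have hLh : (L : ℝ) * h = π / 2 := by rw [hh]; field_simp
  have hhalf : h ≤ π / 2 := by
    rw [hh]
    rw [div_le_div_iff₀ (by positivity) (by norm_num)]
    nlinarith [Real.pi_pos, hL0, (show (1:ℝ) ≤ L by exact_mod_cast hL)]
  set t : ℝ := Int.fract (φ / h) * h with ht
  set j : ℤ := ⌊φ / h⌋ with hj
  have ht0 : 0 ≤ t := mul_nonneg (Int.fract_nonneg _) hpos.le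
  have hth : t < h := by
    have := Int.fract_lt_one (φ / h)
    calc t = Int.fract (φ / h) * h := ht
    _ < 1 * h := by exact mul_lt_mul_of_pos_right this hpos
    _ = h := one_mul h
  have hφ : φ = (j : ℝ) * h + t := by
    have hf : Int.fract (φ / h) = φ / h - (j : ℝ) := rfl
    rw [ht, hf]
    field_simp
    ring
  set G : ℤ → ℝ := fun n => |cos ((n : ℝ) * h - t)| + |sin ((n : ℝ) * h - t)| with hG
  have hGper : ∀ n : ℤ, G (n + L) = G n := by
    intro n
    have harg : ((n + L : ℤ) : ℝ) * h - t = ((n : ℝ) * h - t) + π / 2 := by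
      push_cast
      rw [← hLh]
      ring
    simp only [hG, harg, Real.cos_add_pi_div_two, Real.sin_add_pi_div_two, abs_neg]
    ring
  have step1 : ∑ k ∈ Finset.range L,
      (|cos ((k : ℝ) * h - φ)| + |sin ((k : ℝ) * h - φ)|)
      = ∑ k ∈ Finset.range L, G ((k : ℤ) + (-j)) := by
    apply Finset.sum_congr rfl
    intro k _
    have harg : (k : ℝ) * h - φ = (((k : ℤ) + (-j) : ℤ) : ℝ) * h - t := by
      push_cast
      rw [hφ]
      ring
    rw [harg]
  have step2 : ∑ k ∈ Finset.range L, G ((k : ℤ) + (-j)) = ∑ k ∈ Finset.range L, G (k : ℤ) :=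
    sum_shift L G hGper (-j)
  have step3 : ∑ k ∈ Finset.range L, G (k : ℤ)
      = ∑ k ∈ Finset.range L,
          ((cos ((k : ℝ) * h - t) + sin ((k : ℝ) * h - t)) + (if k = 0 then 2 * sin t else 0)) := by
    apply Finset.sum_congr rfl
    intro k hk
    have hkL : k < L := Finset.mem_range.mp hk
    have hcos : |cos ((k : ℝ) * h - t)| = cos ((k : ℝ) * h - t) := by
      apply abs_of_pos
      apply Real.cos_pos_of_mem_Ioo
      constructor
      · have : (0 : ℝ) ≤ (k : ℝ) * h := by positivity
        nlinarith
      · have hk1 : (k : ℝ) ≤ (L : ℝ) - 1 := by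
          have : (k : ℝ) + 1 ≤ L := by exact_mod_cast hkL
          linarith
        nlinarith
    rcases Nat.eq_zero_or_pos k with hk0 | hk0
    · subst hk0
      have hct : |cos t| = cos t := by
        apply abs_of_nonneg
        apply Real.cos_nonneg_of_mem_Icc
        constructor <;> [linarith [Real.pi_pos]; linarith]
      have hst : |sin t| = sin t := by
        apply abs_of_nonneg
        apply Real.sin_nonneg_of_nonneg_of_le_pi ht0
        linarith [Real.pi_pos]
      simp only [hG, Int.cast_zero, Nat.cast_zero, zero_mul, zero_sub, if_pos rfl,
        Real.cos_neg, Real.sin_neg, abs_neg, hct, hst, if_true, eq_self_iff_true]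
      ring
    · have hne : k ≠ 0 := by omega
      simp only [if_neg hne, add_zero]
      have hsin : |sin ((k : ℝ) * h - t)| = sin ((k : ℝ) * h - t) := by
        apply abs_of_pos
        apply Real.sin_pos_of_pos_of_lt_pi
        · have : h ≤ (k : ℝ) * h := by
            nlinarith [(show (1:ℝ) ≤ k by exact_mod_cast hk0)]
          linarith
        · have hk1 : (k : ℝ) ≤ (L : ℝ) - 1 := by
            have : (k : ℝ) + 1 ≤ L := by exact_mod_cast hkL
            linarith
          nlinarith [Real.pi_pos]
      simp only [hG, Int.cast_natCast]
      rw [hcos, hsin]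
  have hCS := CS L hL
  rw [← hh] at hCS
  have step4 : ∑ k ∈ Finset.range L, ((cos ((k : ℝ) * h - t) + sin ((k : ℝ) * h - t))
        + (if k = 0 then 2 * sin t else 0))
      = (∑ k ∈ Finset.range L, (cos ((k : ℝ) * h) + sin ((k : ℝ) * h))) * cos t + sin t := by
    rw [Finset.sum_add_distrib]
    have hite : ∑ k ∈ Finset.range L, (if k = 0 then 2 * sin t else 0) = 2 * sin t := by
      rw [Finset.sum_ite_eq' (Finset.range L) 0 (fun _ => 2 * sin t)]
      simp only [Finset.mem_range, if_pos (by omega : 0 < L)]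
    have expand : ∀ k ∈ Finset.range L,
        cos ((k : ℝ) * h - t) + sin ((k : ℝ) * h - t)
        = (cos ((k : ℝ) * h) + sin ((k : ℝ) * h)) * cos t
          + (sin ((k : ℝ) * h) - cos ((k : ℝ) * h)) * sin t := by
      intro k _
      rw [Real.cos_sub, Real.sin_sub]
      ring
    have hneg : ∑ k ∈ Finset.range L, (sin ((k : ℝ) * h) - cos ((k : ℝ) * h)) = -1 := by
      have : ∑ k ∈ Finset.range L, (sin ((k : ℝ) * h) - cos ((k : ℝ) * h))
          = -∑ k ∈ Finset.range L, (cos ((k : ℝ) * h) - sin ((k : ℝ) * h)) := by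
        rw [← Finset.sum_neg_distrib]
        apply Finset.sum_congr rfl
        intro k _
        ring
      rw [this, hCS]
    rw [Finset.sum_congr rfl expand, Finset.sum_add_distrib, ← Finset.sum_mul, ← Finset.sum_mul,
      hneg, hite]
    ring
  rw [step1, step2, step3, step4]

lemma sinh_pos (L : ℕ) (hL : 1 ≤ L) : 0 < sin (π / (2 * L)) := by
  have hL0 : (0 : ℝ) < L := by exact_mod_cast Nat.pos_of_ne_zero (by omega)
  have hL1 : (1 : ℝ) ≤ L := by exact_mod_cast hL
  apply Real.sin_pos_of_pos_of_lt_pi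
  · positivity
  · rw [div_lt_iff₀ (by positivity)]
    nlinarith [Real.pi_pos, hL1]

lemma cosh_nonneg (L : ℕ) (hL : 1 ≤ L) : 0 ≤ cos (π / (2 * L)) := by
  have hL0 : (1 : ℝ) ≤ L := by exact_mod_cast hL
  apply Real.cos_nonneg_of_mem_Icc
  constructor
  · have : (0:ℝ) < π / (2 * L) := by positivity
    linarith [Real.pi_pos]
  · rw [div_le_div_iff₀ (by positivity) (by norm_num)]
    nlinarith [Real.pi_pos]

lemma D_pos (L : ℕ) (hL : 1 ≤ L) :
    0 < ∑ k ∈ Finset.range L, (cos ((k : ℝ) * (π / (2 * L))) + sin ((k : ℝ) * (π / (2 * L)))) := by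
  have h1 := sinhD L hL
  have h2 := sinh_pos L hL
  have h3 := cosh_nonneg L hL
  nlinarith

lemma strict (L : ℕ) (hL : 1 ≤ L) {t : ℝ} (ht0 : 0 < t) (hth : t < π / (2 * L)) :
    (∑ k ∈ Finset.range L, (cos ((k : ℝ) * (π / (2 * L))) + sin ((k : ℝ) * (π / (2 * L)))))
      < (∑ k ∈ Finset.range L, (cos ((k : ℝ) * (π / (2 * L))) + sin ((k : ℝ) * (π / (2 * L)))))
          * cos t + sin t := by
  set h : ℝ := π / (2 * L) with hh
  set D : ℝ := ∑ k ∈ Finset.range L, (cos ((k : ℝ) * h) + sin ((k : ℝ) * h)) with hD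
  have hL0 : (1 : ℝ) ≤ L := by exact_mod_cast hL
  have hhalf : h ≤ π / 2 := by
    rw [hh, div_le_div_iff₀ (by positivity) (by norm_num)]
    nlinarith [Real.pi_pos]
  have hsinh : 0 < sin h := sinh_pos L hL
  have hDsin : sin h * D = 1 + cos h := sinhD L hL
  -- half-angle setup
  set x : ℝ := t / 2 with hx
  set y : ℝ := h / 2 with hy
  have hx0 : 0 < x := by rw [hx]; linarith
  have hxy : x < y := by rw [hx, hy]; linarith
  have hy4 : y ≤ π / 4 := by rw [hy]; linarith
  have hpi := Real.pi_pos
  have hsx : 0 < sin x := Real.sin_pos_of_pos_of_lt_pi hx0 (by linarith)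
  have hsy : 0 < sin y := Real.sin_pos_of_pos_of_lt_pi (by linarith) (by linarith)
  have hcx : 0 < cos x := Real.cos_pos_of_mem_Ioo ⟨by linarith, by linarith⟩
  have hcy : 0 < cos y := Real.cos_pos_of_mem_Ioo ⟨by linarith, by linarith⟩
  have hsyx : 0 < sin (y - x) :=
    Real.sin_pos_of_pos_of_lt_pi (by linarith) (by linarith)
  rw [Real.sin_sub] at hsyx
  have hct : cos t = 2 * cos x ^ 2 - 1 := by
    rw [show t = 2 * x by rw [hx]; ring, Real.cos_two_mul]
  have hst : sin t = 2 * sin x * cos x := by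
    rw [show t = 2 * x by rw [hx]; ring, Real.sin_two_mul]
  have hch : cos h = 2 * cos y ^ 2 - 1 := by
    rw [show h = 2 * y by rw [hy]; ring, Real.cos_two_mul]
  have hsh : sin h = 2 * sin y * cos y := by
    rw [show h = 2 * y by rw [hy]; ring, Real.sin_two_mul]
  have key : (1 + cos h) * (1 - cos t) < sin h * sin t := by
    rw [hct, hst, hch, hsh]
    have hpyx : sin x ^ 2 + cos x ^ 2 = 1 := Real.sin_sq_add_cos_sq x
    nlinarith [mul_pos (mul_pos hcy hsx) hsyx, sq_nonneg (sin x), sq_nonneg (cos y)]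
  have key2 : D * (1 - cos t) < sin t := by
    have h1 : sin h * (D * (1 - cos t)) < sin h * sin t := by
      have hcost : 1 - cos t > 0 := by
        have hp := Real.sin_sq_add_cos_sq x
        have h2 : 1 - cos t = 2 * sin x ^ 2 := by rw [hct]; linarith
        nlinarith [mul_pos hsx hsx]
      calc sin h * (D * (1 - cos t)) = (1 + cos h) * (1 - cos t) := by rw [← hDsin]; ring
      _ < sin h * sin t := key
    exact (mul_lt_mul_iff_right₀ hsinh).mp h1
  nlinarith [key2]


set_option maxHeartbeats 1000000 in
theorem stmt2 (L : ℕ) (hL : 1 ≤ L) (a b : ℝ) :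
    Ifun L a b = Real.sqrt (a ^ 2 + b ^ 2) ↔
      ∃ k < L,
        a * Real.cos (π * (k : ℝ) / (2 * (L : ℝ))) + b * Real.sin (π * (k : ℝ) / (2 * (L : ℝ))) = 0 ∨
        b * Real.cos (π * (k : ℝ) / (2 * (L : ℝ))) - a * Real.sin (π * (k : ℝ) / (2 * (L : ℝ))) = 0 := by
  have hL0 : (0 : ℝ) < L := by exact_mod_cast Nat.pos_of_ne_zero (by omega)
  have harg : ∀ k : ℕ, π * (k : ℝ) / (2 * (L : ℝ)) = (k : ℝ) * (π / (2 * L)) := by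
    intro k; ring
  set h : ℝ := π / (2 * L) with hh
  have hpos : 0 < h := by rw [hh]; positivity
  have hLh : (L : ℝ) * h = π / 2 := by rw [hh]; field_simp
  by_cases hab : a = 0 ∧ b = 0
  · obtain ⟨ha, hb⟩ := hab
    subst ha; subst hb
    constructor
    · intro _
      exact ⟨0, by omega, Or.inl (by norm_num)⟩
    · intro _
      simp [Ifun]
  · -- nondegenerate case
    have habs : a ≠ 0 ∨ b ≠ 0 := by
      by_contra hcon
      push_neg at hcon
      exact hab ⟨hcon.1, hcon.2⟩
    have hr2 : 0 < a ^ 2 + b ^ 2 := by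
      rcases habs with hne | hne
      · have := sq_pos_of_ne_zero hne; nlinarith [sq_nonneg b]
      · have := sq_pos_of_ne_zero hne; nlinarith [sq_nonneg a]
    set r : ℝ := Real.sqrt (a ^ 2 + b ^ 2) with hrdef
    have hr : 0 < r := Real.sqrt_pos.mpr hr2
    set z : ℂ := ⟨a, b⟩ with hz
    have hrz : ‖z‖ = r := by
      rw [Complex.norm_def, hz, Complex.normSq_mk, hrdef]
      ring_nf
    set φ : ℝ := Complex.arg z with hφdef
    have hA : r * cos φ = a := by
      rw [← hrz, hφdef]; exact Complex.norm_mul_cos_arg z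
    have hB : r * sin φ = b := by
      rw [← hrz, hφdef]; exact Complex.norm_mul_sin_arg z
    have hterm1 : ∀ x : ℝ, a * cos x + b * sin x = r * cos (x - φ) := by
      intro x; rw [← hA, ← hB, Real.cos_sub]; ring
    have hterm2 : ∀ x : ℝ, b * cos x - a * sin x = -(r * sin (x - φ)) := by
      intro x; rw [← hA, ← hB, Real.sin_sub]; ring
    set D : ℝ := ∑ k ∈ Finset.range L, (cos ((k : ℝ) * h) + sin ((k : ℝ) * h)) with hD
    have hD0 : 0 < D := by rw [hD, hh]; exact D_pos L hL
    set t : ℝ := Int.fract (φ / h) * h with ht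
    have ht0 : 0 ≤ t := mul_nonneg (Int.fract_nonneg _) hpos.le
    have hth : t < h := by
      have := Int.fract_lt_one (φ / h)
      calc t = Int.fract (φ / h) * h := ht
      _ < 1 * h := mul_lt_mul_of_pos_right this hpos
      _ = h := one_mul h
    -- rewrite Ifun
    have hnum : ∑ k ∈ Finset.range L,
        (|a * Real.cos (π * (k : ℝ) / (2 * (L : ℝ))) + b * Real.sin (π * (k : ℝ) / (2 * (L : ℝ)))| +
         |b * Real.cos (π * (k : ℝ) / (2 * (L : ℝ))) - a * Real.sin (π * (k : ℝ) / (2 * (L : ℝ)))|)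
        = r * (D * cos t + sin t) := by
      have e1 : ∀ k ∈ Finset.range L,
          (|a * Real.cos (π * (k : ℝ) / (2 * (L : ℝ))) + b * Real.sin (π * (k : ℝ) / (2 * (L : ℝ)))| +
           |b * Real.cos (π * (k : ℝ) / (2 * (L : ℝ))) - a * Real.sin (π * (k : ℝ) / (2 * (L : ℝ)))|)
          = r * (|cos ((k : ℝ) * h - φ)| + |sin ((k : ℝ) * h - φ)|) := by
        intro k _
        rw [harg k, hterm1, hterm2, abs_neg, abs_mul, abs_mul, abs_of_pos hr]
        ring
      rw [Finset.sum_congr rfl e1, ← Finset.mul_sum]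
      have := sum_f L hL φ
      rw [← hh] at this
      rw [this, ← hD, ← ht]
    have hden : ∑ k ∈ Finset.range L,
        (Real.cos (π * (k : ℝ) / (2 * (L : ℝ))) + Real.sin (π * (k : ℝ) / (2 * (L : ℝ)))) = D := by
      rw [hD]
      exact Finset.sum_congr rfl fun k _ => by rw [harg k]
    have hIfun : Ifun L a b = r * (D * cos t + sin t) / D := by
      rw [Ifun, hnum, hden]
    -- the equality chain
    have hiff1 : Ifun L a b = r ↔ D * cos t + sin t = D := by
      rw [hIfun, div_eq_iff hD0.ne']
      constructor
      · intro hyp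
        have := mul_left_cancel₀ hr.ne' (by linarith [hyp] : r * (D * cos t + sin t) = r * D)
        exact this
      · intro hyp; rw [hyp]
    have hiff2 : D * cos t + sin t = D ↔ t = 0 := by
      constructor
      · intro hyp
        by_contra htne
        have htpos : 0 < t := lt_of_le_of_ne ht0 (Ne.symm htne)
        have := strict L hL htpos (by rw [← hh]; exact hth)
        rw [← hh, ← hD] at this
        linarith
      · intro hyp
        rw [hyp]
        simp
    -- condition translation
    have hiff3 : (∃ k < L,
        a * Real.cos (π * (k : ℝ) / (2 * (L : ℝ))) + b * Real.sin (π * (k : ℝ) / (2 * (L : ℝ))) = 0 ∨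
        b * Real.cos (π * (k : ℝ) / (2 * (L : ℝ))) - a * Real.sin (π * (k : ℝ) / (2 * (L : ℝ))) = 0)
        ↔ ∃ k < L, cos ((k : ℝ) * h - φ) = 0 ∨ sin ((k : ℝ) * h - φ) = 0 := by
      apply exists_congr
      intro k
      apply and_congr_right
      intro _
      rw [harg k, hterm1, hterm2, neg_eq_zero, mul_eq_zero, mul_eq_zero]
      constructor
      · rintro (hc | hc) <;> rcases hc with hc | hc
        · exact absurd hc hr.ne'
        · exact Or.inl hc
        · exact absurd hc hr.ne'
        · exact Or.inr hc
      · rintro (hc | hc)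
        · exact Or.inl (Or.inr hc)
        · exact Or.inr (Or.inr hc)
    have hiff4 : t = 0 ↔ ∃ k < L, cos ((k : ℝ) * h - φ) = 0 ∨ sin ((k : ℝ) * h - φ) = 0 := by
      constructor
      · intro hyp
        have hfr : Int.fract (φ / h) = 0 := by
          rcases mul_eq_zero.mp (ht ▸ hyp) with hc | hc
          · exact hc
          · exact absurd hc hpos.ne'
        set j : ℤ := ⌊φ / h⌋ with hj
        have hφj : φ = (j : ℝ) * h := by
          have h1 : φ / h - (j : ℝ) = 0 := by
            rw [hj]
            rw [Int.self_sub_floor]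
            exact hfr
          have h2 : φ / h = (j : ℝ) := by linarith
          field_simp at h2
          linarith [h2]
        set m : ℤ := j / L with hm
        set k : ℕ := (j % L).toNat with hk
        have hjL : (0:ℤ) < (L:ℤ) := by exact_mod_cast Nat.pos_of_ne_zero (by omega)
        have hmod0 : (0:ℤ) ≤ j % L := Int.emod_nonneg j hjL.ne'
        have hkL : k < L := by
          rw [hk]
          rw [← Nat.cast_lt (α := ℤ), Int.toNat_of_nonneg hmod0]
          exact Int.emod_lt_of_pos j hjL
        have hkcast : ((k : ℕ) : ℤ) = j % L := Int.toNat_of_nonneg hmod0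
        have hjdecomp : (j : ℤ) = L * m + k := by
          rw [hkcast, hm]
          exact (Int.mul_ediv_add_emod j L).symm
        refine ⟨k, hkL, ?_⟩
        have hargk : (k : ℝ) * h - φ = -(m : ℝ) * (π / 2) := by
          rw [hφj, ← hLh]
          have : ((j : ℤ) : ℝ) = (L : ℝ) * m + k := by
            exact_mod_cast congrArg (fun x : ℤ => (x : ℝ)) hjdecomp
          rw [this]
          ring
        have hsin2 : sin (2 * ((k : ℝ) * h - φ)) = 0 := by
          rw [hargk, show 2 * (-(m : ℝ) * (π / 2)) = ((-m : ℤ) : ℝ) * π by push_cast; ring]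
          exact Real.sin_int_mul_pi (-m)
        rw [Real.sin_two_mul] at hsin2
        rcases mul_eq_zero.mp hsin2 with hc | hc
        · rcases mul_eq_zero.mp hc with hc' | hc'
          · norm_num at hc'
          · exact Or.inr hc'
        · exact Or.inl hc
      · rintro ⟨k, hkL, hck | hsk⟩
        · obtain ⟨n, hn⟩ := Real.cos_eq_zero_iff.mp hck
          have hφeq : φ = (((k : ℤ) - (2 * n + 1) * L : ℤ) : ℝ) * h := by
            push_cast
            have : (2 * (n:ℝ) + 1) * π / 2 = (2 * (n:ℝ) + 1) * ((L:ℝ) * h) := by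
              rw [hLh]; ring
            linarith [hn, this]
          rw [ht, hφeq]
          have : ((((k : ℤ) - (2 * n + 1) * L : ℤ) : ℝ) * h) / h = (((k : ℤ) - (2 * n + 1) * L : ℤ) : ℝ) := by
            field_simp
          rw [this, Int.fract_intCast, zero_mul]
        · obtain ⟨n, hn⟩ := Real.sin_eq_zero_iff.mp hsk
          have hφeq : φ = (((k : ℤ) - 2 * n * L : ℤ) : ℝ) * h := by
            push_cast
            have hnpi : (n : ℝ) * π = (n : ℝ) * (2 * ((L:ℝ) * h)) := by
              rw [hLh]; ring
            linarith [hn, hnpi]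
          rw [ht, hφeq]
          have : ((((k : ℤ) - 2 * n * L : ℤ) : ℝ) * h) / h = (((k : ℤ) - 2 * n * L : ℤ) : ℝ) := by
            field_simp
          rw [this, Int.fract_intCast, zero_mul]
    rw [hiff1, hiff2, hiff4, hiff3]
end

section
/- For every (a,b) ∈ ℝ², the sequence L ↦ I(a,b;L) converges to √(a² + b²) as L → ∞. -/
open Real

noncomputable def gg (x : ℝ) : ℝ := |Real.cos x| + |Real.sin x|

lemma gg_periodic : Function.Periodic gg (π / 2) := by
  intro x
  simp only [gg, Real.cos_add_pi_div_two, Real.sin_add_pi_div_two, abs_neg]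
  ring

lemma lip_sin (x y : ℝ) : |Real.sin x - Real.sin y| ≤ |x - y| := by
  rw [Real.sin_sub_sin, abs_mul, abs_mul]
  have h1 : |Real.sin ((x - y) / 2)| ≤ |x - y| / 2 := by
    have := Real.abs_sin_le_abs (x := (x - y) / 2)
    rwa [abs_div, abs_two] at this
  have h2 : |Real.cos ((x + y) / 2)| ≤ 1 := Real.abs_cos_le_one _
  have h3 : (0:ℝ) ≤ |Real.sin ((x - y) / 2)| := abs_nonneg _
  rw [abs_two]
  nlinarith [abs_nonneg (x - y)]

lemma lip_cos (x y : ℝ) : |Real.cos x - Real.cos y| ≤ |x - y| := by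
  rw [Real.cos_sub_cos, abs_mul, abs_mul]
  have h1 : |Real.sin ((x - y) / 2)| ≤ |x - y| / 2 := by
    have := Real.abs_sin_le_abs (x := (x - y) / 2)
    rwa [abs_div, abs_two] at this
  have h2 : |Real.sin ((x + y) / 2)| ≤ 1 := Real.abs_sin_le_one _
  have h3 : (0:ℝ) ≤ |Real.sin ((x - y) / 2)| := abs_nonneg _
  have h4 : |(-2 : ℝ)| = 2 := by norm_num
  rw [h4]
  nlinarith [abs_nonneg (x - y), abs_nonneg (Real.sin ((x + y) / 2))]

lemma gg_lip (x y : ℝ) : |gg x - gg y| ≤ 2 * |x - y| := by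
  have h1 : abs (abs (Real.cos x) - abs (Real.cos y)) ≤ |x - y| :=
    (abs_abs_sub_abs_le_abs_sub _ _).trans (lip_cos x y)
  have h2 : abs (abs (Real.sin x) - abs (Real.sin y)) ≤ |x - y| :=
    (abs_abs_sub_abs_le_abs_sub _ _).trans (lip_sin x y)
  have heq : gg x - gg y
      = (abs (Real.cos x) - abs (Real.cos y)) + (abs (Real.sin x) - abs (Real.sin y)) := by
    unfold gg; ring
  rw [heq]
  calc _ ≤ abs (abs (Real.cos x) - abs (Real.cos y))
        + abs (abs (Real.sin x) - abs (Real.sin y)) := abs_add_le _ _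
    _ ≤ 2 * |x - y| := by linarith

noncomputable def SS (L : ℕ) (ψ : ℝ) : ℝ :=
  ∑ k ∈ Finset.range L, gg (π * (k : ℝ) / (2 * (L : ℝ)) - ψ)

lemma SS_periodic (n : ℕ) : Function.Periodic (SS (n + 1)) (π / (2 * ((n : ℝ) + 1))) := by
  intro ψ
  have hL : ((n : ℝ) + 1) ≠ 0 := by positivity
  have hcast : (((n : ℕ) + 1 : ℕ) : ℝ) = (n : ℝ) + 1 := by push_cast; ring
  unfold SS
  rw [Finset.sum_range_succ', Finset.sum_range_succ]
  congr 1
  · apply Finset.sum_congr rfl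
    intro k _
    congr 1
    rw [hcast]
    push_cast
    field_simp
    ring
  · rw [hcast]
    have harg : π * (0 : ℝ) / (2 * ((n : ℝ) + 1)) - (ψ + π / (2 * ((n : ℝ) + 1)))
        = (π * (n : ℝ) / (2 * ((n : ℝ) + 1)) - ψ) - π / 2 := by
      field_simp
      ring
    rw [Nat.cast_zero] at *
    rw [harg]
    have := gg_periodic (π * (n : ℝ) / (2 * ((n : ℝ) + 1)) - ψ - π / 2)
    rw [sub_add_cancel] at this
    exact this.symm

lemma abs_SS_sub (n : ℕ) (ψ : ℝ) : |SS (n + 1) ψ - SS (n + 1) 0| ≤ π := by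
  set d : ℝ := π / (2 * ((n : ℝ) + 1)) with hd
  have hdpos : 0 < d := by rw [hd]; positivity
  set m : ℤ := ⌊ψ / d⌋ with hm
  set δ : ℝ := ψ - m * d with hδ
  have hSδ : SS (n + 1) δ = SS (n + 1) ψ := (SS_periodic n).sub_int_mul_eq m
  have hfl : (m : ℝ) ≤ ψ / d := Int.floor_le _
  have hfl2 : ψ / d < (m : ℝ) + 1 := Int.lt_floor_add_one _
  have hδ0 : 0 ≤ δ := by
    rw [hδ]
    have : (m : ℝ) * d ≤ ψ := (le_div_iff₀ hdpos).mp hfl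
    linarith
  have hδd : δ ≤ d := by
    rw [hδ]
    have : ψ < ((m : ℝ) + 1) * d := by
      calc ψ = (ψ / d) * d := by field_simp
        _ < ((m : ℝ) + 1) * d := by
            exact mul_lt_mul_of_pos_right hfl2 hdpos
    nlinarith
  rw [← hSδ]
  have key : |SS (n + 1) δ - SS (n + 1) 0| ≤ ((n : ℝ) + 1) * (2 * δ) := by
    unfold SS
    rw [← Finset.sum_sub_distrib]
    calc |∑ k ∈ Finset.range (n + 1),
            (gg (π * (k : ℝ) / (2 * (((n:ℕ)+1 : ℕ) : ℝ)) - δ) -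
             gg (π * (k : ℝ) / (2 * (((n:ℕ)+1 : ℕ) : ℝ)) - 0))|
        ≤ ∑ k ∈ Finset.range (n + 1),
            |gg (π * (k : ℝ) / (2 * (((n:ℕ)+1 : ℕ) : ℝ)) - δ) -
             gg (π * (k : ℝ) / (2 * (((n:ℕ)+1 : ℕ) : ℝ)) - 0)| :=
          Finset.abs_sum_le_sum_abs _ _
      _ ≤ ∑ k ∈ Finset.range (n + 1), 2 * δ := by
          apply Finset.sum_le_sum
          intro k _
          have := gg_lip (π * (k : ℝ) / (2 * (((n:ℕ)+1 : ℕ) : ℝ)) - δ)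
            (π * (k : ℝ) / (2 * (((n:ℕ)+1 : ℕ) : ℝ)) - 0)
          have harg : (π * (k : ℝ) / (2 * (((n:ℕ)+1 : ℕ) : ℝ)) - δ) -
              (π * (k : ℝ) / (2 * (((n:ℕ)+1 : ℕ) : ℝ)) - 0) = -δ := by ring
          rw [harg, abs_neg, abs_of_nonneg hδ0] at this
          exact this
      _ = ((n : ℝ) + 1) * (2 * δ) := by
          rw [Finset.sum_const, Finset.card_range, nsmul_eq_mul]
          push_cast; ring
  calc |SS (n + 1) δ - SS (n + 1) 0| ≤ ((n : ℝ) + 1) * (2 * δ) := key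
    _ ≤ ((n : ℝ) + 1) * (2 * d) := by
        apply mul_le_mul_of_nonneg_left (by linarith) (by positivity)
    _ = π := by rw [hd]; field_simp

lemma exists_phi (a b : ℝ) :
    ∃ φ : ℝ, a = Real.sqrt (a ^ 2 + b ^ 2) * Real.cos φ ∧
      b = Real.sqrt (a ^ 2 + b ^ 2) * Real.sin φ := by
  rcases eq_or_ne (a ^ 2 + b ^ 2) 0 with h | h
  · have ha : a = 0 := by nlinarith [sq_nonneg a, sq_nonneg b]
    have hb : b = 0 := by nlinarith [sq_nonneg a, sq_nonneg b]
    exact ⟨0, by simp [ha, hb]⟩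
  · have hpos : 0 < a ^ 2 + b ^ 2 := lt_of_le_of_ne (by positivity) (Ne.symm h)
    set z : ℂ := ⟨a, b⟩ with hz
    have habs : ‖z‖ = Real.sqrt (a ^ 2 + b ^ 2) := by
      rw [Complex.norm_def, Complex.normSq_mk]
      ring_nf
    have habsne : ‖z‖ ≠ 0 := by
      rw [habs]
      exact ne_of_gt (Real.sqrt_pos.mpr hpos)
    have hz0 : z ≠ 0 := by
      intro h0
      apply habsne
      rw [h0]
      simp
    refine ⟨z.arg, ?_, ?_⟩
    · rw [Complex.cos_arg hz0]
      have : z.re = a := rfl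
      rw [this, ← habs]
      field_simp
    · rw [Complex.sin_arg]
      have : z.im = b := rfl
      rw [this, ← habs]
      field_simp

theorem stmt3 (a b : ℝ) :
    Filter.Tendsto (fun L : ℕ => Ifun L a b) Filter.atTop
      (nhds (Real.sqrt (a ^ 2 + b ^ 2))) := by
  obtain ⟨φ, ha, hb⟩ := exists_phi a b
  set r := Real.sqrt (a ^ 2 + b ^ 2) with hr_def
  have hr : 0 ≤ r := Real.sqrt_nonneg _
  have hterm : ∀ θ : ℝ,
      |a * Real.cos θ + b * Real.sin θ| + |b * Real.cos θ - a * Real.sin θ|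
        = r * gg (θ - φ) := by
    intro θ
    have h1 : a * Real.cos θ + b * Real.sin θ = r * Real.cos (θ - φ) := by
      rw [Real.cos_sub, ha, hb]; ring
    have h2 : b * Real.cos θ - a * Real.sin θ = -(r * Real.sin (θ - φ)) := by
      rw [Real.sin_sub, ha, hb]; ring
    rw [h1, h2, abs_neg, abs_mul, abs_mul, abs_of_nonneg hr]
    unfold gg; ring
  have key : ∀ n : ℕ, |Ifun (n + 1) a b - r| ≤ r * π / ((n : ℝ) + 1) := by
    intro n
    have hcast : (((n : ℕ) + 1 : ℕ) : ℝ) = (n : ℝ) + 1 := by push_cast; ring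
    have hNum : (∑ k ∈ Finset.range (n + 1),
        (|a * Real.cos (π * (k : ℝ) / (2 * (((n:ℕ)+1 : ℕ) : ℝ))) +
           b * Real.sin (π * (k : ℝ) / (2 * (((n:ℕ)+1 : ℕ) : ℝ)))| +
         |b * Real.cos (π * (k : ℝ) / (2 * (((n:ℕ)+1 : ℕ) : ℝ))) -
           a * Real.sin (π * (k : ℝ) / (2 * (((n:ℕ)+1 : ℕ) : ℝ)))|))
        = r * SS (n + 1) φ := by
      unfold SS
      rw [Finset.mul_sum]
      exact Finset.sum_congr rfl fun k _ => hterm _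
    have hmem : ∀ k ∈ Finset.range (n + 1),
        0 ≤ Real.cos (π * (k : ℝ) / (2 * (((n:ℕ)+1 : ℕ) : ℝ))) ∧
        0 ≤ Real.sin (π * (k : ℝ) / (2 * (((n:ℕ)+1 : ℕ) : ℝ))) := by
      intro k hk
      rw [Finset.mem_range] at hk
      have hk' : (k : ℝ) ≤ (n : ℝ) := by exact_mod_cast Nat.lt_succ_iff.mp hk
      have h0 : 0 ≤ π * (k : ℝ) / (2 * (((n:ℕ)+1 : ℕ) : ℝ)) := by
        rw [hcast]; positivity
      have hle : π * (k : ℝ) / (2 * (((n:ℕ)+1 : ℕ) : ℝ)) ≤ π / 2 := by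
        rw [hcast, div_le_div_iff₀ (by positivity) (by norm_num)]
        nlinarith [Real.pi_pos]
      constructor
      · exact Real.cos_nonneg_of_mem_Icc ⟨by linarith [Real.pi_pos], hle⟩
      · exact Real.sin_nonneg_of_nonneg_of_le_pi h0 (by linarith [Real.pi_pos])
    have hDen : (∑ k ∈ Finset.range (n + 1),
        (Real.cos (π * (k : ℝ) / (2 * (((n:ℕ)+1 : ℕ) : ℝ))) +
         Real.sin (π * (k : ℝ) / (2 * (((n:ℕ)+1 : ℕ) : ℝ)))))
        = SS (n + 1) 0 := by
      unfold SS
      apply Finset.sum_congr rfl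
      intro k hk
      obtain ⟨hc, hs⟩ := hmem k hk
      rw [sub_zero]
      unfold gg
      rw [abs_of_nonneg hc, abs_of_nonneg hs]
    have hDge : ((n : ℝ) + 1) ≤ SS (n + 1) 0 := by
      rw [← hDen]
      have : ∀ k ∈ Finset.range (n + 1), (1 : ℝ) ≤
          Real.cos (π * (k : ℝ) / (2 * (((n:ℕ)+1 : ℕ) : ℝ))) +
          Real.sin (π * (k : ℝ) / (2 * (((n:ℕ)+1 : ℕ) : ℝ))) := by
        intro k hk
        obtain ⟨hc, hs⟩ := hmem k hk
        set θ := π * (k : ℝ) / (2 * (((n:ℕ)+1 : ℕ) : ℝ))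
        have hpyth := Real.sin_sq_add_cos_sq θ
        have hc1 : Real.cos θ ≤ 1 := Real.cos_le_one θ
        have hs1 : Real.sin θ ≤ 1 := Real.sin_le_one θ
        nlinarith
      calc ((n : ℝ) + 1) = ∑ _k ∈ Finset.range (n + 1), (1 : ℝ) := by
            rw [Finset.sum_const, Finset.card_range, nsmul_eq_mul]; push_cast; ring
        _ ≤ _ := Finset.sum_le_sum this
    have hD0 : 0 < SS (n + 1) 0 := lt_of_lt_of_le (by positivity) hDge
    have hI : Ifun (n + 1) a b = r * SS (n + 1) φ / SS (n + 1) 0 := by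
      unfold Ifun
      rw [hNum, hDen]
    have hdiff : Ifun (n + 1) a b - r
        = r * (SS (n + 1) φ - SS (n + 1) 0) / SS (n + 1) 0 := by
      rw [hI]
      field_simp
    rw [hdiff, abs_div, abs_of_pos hD0, abs_mul, abs_of_nonneg hr]
    apply div_le_div₀ (by positivity) ?_ (by positivity) hDge
    exact mul_le_mul_of_nonneg_left (abs_SS_sub n φ) hr
  rw [← tendsto_sub_nhds_zero_iff]
  apply squeeze_zero_norm' (a := fun L : ℕ => r * π / (L : ℝ))
  · filter_upwards [Filter.eventually_ge_atTop 1] with L hL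
    obtain ⟨n, rfl⟩ := Nat.exists_eq_succ_of_ne_zero (Nat.one_le_iff_ne_zero.mp hL)
    rw [Real.norm_eq_abs]
    have := key n
    rw [Nat.cast_succ]
    exact this
  · exact tendsto_const_div_atTop_nhds_zero_nat _
end

section
/- Let h : ZMod N × ZMod M → ℝ be a mean-preserving kernel. If an image z : ZMod N × ZMod M → ℝ satisfies h ⋆ z = 0 and TV_a(z) = 0, then z = 0. Consequently, for any λ > 0, the map z ↦ ‖h ⋆ z‖₂ + λ·TV_a(z) vanishes only at z = 0. -/
/-- Periodic discrete partial difference in the first (column) direction. -/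
def gradX {N M : ℕ} (f : ZMod N × ZMod M → ℝ) : ZMod N × ZMod M → ℝ :=
  fun p => f p - f (p.1 - 1, p.2)

/-- Periodic discrete partial difference in the second (row) direction. -/
def gradY {N M : ℕ} (f : ZMod N × ZMod M → ℝ) : ZMod N × ZMod M → ℝ :=
  fun p => f p - f (p.1, p.2 - 1)

/-- Anisotropic total variation. -/
noncomputable def TVa {N M : ℕ} [NeZero N] [NeZero M] (f : ZMod N × ZMod M → ℝ) : ℝ :=
  ∑ p : ZMod N × ZMod M, (|gradX f p| + |gradY f p|)

/-- Circular (periodic) convolution of a kernel `h` with an image `f`. -/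
noncomputable def conv {N M : ℕ} [NeZero N] [NeZero M]
    (h f : ZMod N × ZMod M → ℝ) : ZMod N × ZMod M → ℝ :=
  fun p => ∑ q : ZMod N × ZMod M, h q * f (p - q)

/-- The `ℓ₂`-norm of an image. -/
noncomputable def l2norm {N M : ℕ} [NeZero N] [NeZero M]
    (u : ZMod N × ZMod M → ℝ) : ℝ :=
  Real.sqrt (∑ p : ZMod N × ZMod M, (u p) ^ 2)

lemma tva_const {N M : ℕ} [NeZero N] [NeZero M] (z : ZMod N × ZMod M → ℝ)
    (hz : TVa z = 0) : ∀ p : ZMod N × ZMod M, z p = z 0 := by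
  have hnn : ∀ p : ZMod N × ZMod M, 0 ≤ |gradX z p| + |gradY z p| := fun p => by positivity
  have hz0 : ∀ p : ZMod N × ZMod M, |gradX z p| + |gradY z p| = 0 := by
    intro p
    have := (Finset.sum_eq_zero_iff_of_nonneg (fun p _ => hnn p)).mp hz
    exact this p (Finset.mem_univ p)
  have hgx : ∀ p : ZMod N × ZMod M, z p = z (p.1 - 1, p.2) := by
    intro p
    have h1 : |gradX z p| = 0 := by
      have := hz0 p
      have := abs_nonneg (gradX z p); have := abs_nonneg (gradY z p); linarith [hz0 p]
    have := abs_eq_zero.mp h1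
    simpa [gradX, sub_eq_zero] using this
  have hgy : ∀ p : ZMod N × ZMod M, z p = z (p.1, p.2 - 1) := by
    intro p
    have h1 : |gradY z p| = 0 := by
      have := abs_nonneg (gradX z p); have := abs_nonneg (gradY z p); linarith [hz0 p]
    have := abs_eq_zero.mp h1
    simpa [gradY, sub_eq_zero] using this
  -- first: shift in x direction
  have hx : ∀ (k : ℕ) (a : ZMod N) (b : ZMod M), z (a, b) = z (a - (k : ZMod N), b) := by
    intro k
    induction k with
    | zero => simp
    | succ n ih =>
      intro a b
      have := hgx (a - (n : ZMod N), b)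
      rw [ih a b, this]
      push_cast
      ring_nf
  have hy : ∀ (k : ℕ) (a : ZMod N) (b : ZMod M), z (a, b) = z (a, b - (k : ZMod M)) := by
    intro k
    induction k with
    | zero => simp
    | succ n ih =>
      intro a b
      have := hgy (a, b - (n : ZMod M))
      rw [ih a b, this]
      push_cast
      ring_nf
  intro p
  obtain ⟨a, b⟩ := p
  obtain ⟨ka, hka⟩ := ZMod.natCast_zmod_surjective (n := N) a
  obtain ⟨kb, hkb⟩ := ZMod.natCast_zmod_surjective (n := M) b
  have h1 : z (a, b) = z (a - (ka : ZMod N), b) := hx ka a b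
  have h2 : z (a - (ka : ZMod N), b) = z (a - (ka : ZMod N), b - (kb : ZMod M)) :=
    hy kb _ b
  rw [h1, h2, hka, hkb]
  simp
  rfl

theorem stmt15 {N M : ℕ} [NeZero N] [NeZero M] (h : ZMod N × ZMod M → ℝ)
    (hmean : ∑ p : ZMod N × ZMod M, h p = 1) :
    (∀ z : ZMod N × ZMod M → ℝ, conv h z = 0 → TVa z = 0 → z = 0) ∧
    (∀ lam : ℝ, 0 < lam → ∀ z : ZMod N × ZMod M → ℝ,
      l2norm (conv h z) + lam * TVa z = 0 → z = 0) := by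
  have key : ∀ z : ZMod N × ZMod M → ℝ, conv h z = 0 → TVa z = 0 → z = 0 := by
    intro z hc ht
    have hconst := tva_const z ht
    have hc0 : conv h z 0 = 0 := by rw [hc]; rfl
    have : conv h z 0 = z 0 := by
      simp only [conv]
      calc ∑ q : ZMod N × ZMod M, h q * z (0 - q)
          = ∑ q : ZMod N × ZMod M, h q * z 0 := by
            apply Finset.sum_congr rfl; intro q _; rw [hconst (0 - q)]
        _ = z 0 := by rw [← Finset.sum_mul, hmean, one_mul]
    have hz0 : z 0 = 0 := by rw [← this, hc0]
    funext p
    rw [hconst p, hz0]; rfl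
  refine ⟨key, ?_⟩
  intro lam hlam z hsum
  have htnn : 0 ≤ TVa z := by
    apply Finset.sum_nonneg; intro p _; positivity
  have hlnn : 0 ≤ l2norm (conv h z) := Real.sqrt_nonneg _
  have ht : TVa z = 0 := by nlinarith
  have hl : l2norm (conv h z) = 0 := by nlinarith
  have hsq : ∑ p : ZMod N × ZMod M, (conv h z p) ^ 2 = 0 := by
    have h1 := (Real.sqrt_eq_zero').mp hl
    have h2 : (0:ℝ) ≤ ∑ p : ZMod N × ZMod M, (conv h z p) ^ 2 := by
      apply Finset.sum_nonneg; intro p _; positivity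
    linarith
  have hc : conv h z = 0 := by
    funext p
    have := (Finset.sum_eq_zero_iff_of_nonneg
      (f := fun p => (conv h z p) ^ 2) (fun p _ => by positivity)).mp hsq p (Finset.mem_univ p)
    have := pow_eq_zero_iff (n := 2) (by norm_num) |>.mp this
    simpa using this
  exact key z hc ht
end

section
/- Let h : ZMod N × ZMod M → ℝ be a mean-preserving kernel and λ > 0. Then the map z ↦ ‖h ⋆ z‖₂ + λ·TV_a(z) is a norm on the space of images: it is nonnegative, vanishes exactly at z = 0, is absolutely homogeneous (the value at c·z equals |c| times the value at z for every c ∈ ℝ), and satisfies the triangle inequality. -/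
lemma l2norm_eq {N M : ℕ} [NeZero N] [NeZero M] (u : ZMod N × ZMod M → ℝ) :
    l2norm u = ‖(WithLp.equiv 2 (ZMod N × ZMod M → ℝ)).symm u‖ := by
  rw [EuclideanSpace.norm_eq]
  unfold l2norm
  congr 1
  exact Finset.sum_congr rfl fun p _ => by simp [sq_abs]

lemma l2norm_nonneg {N M : ℕ} [NeZero N] [NeZero M] (u : ZMod N × ZMod M → ℝ) :
    0 ≤ l2norm u := Real.sqrt_nonneg _

lemma TVa_nonneg {N M : ℕ} [NeZero N] [NeZero M] (f : ZMod N × ZMod M → ℝ) :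
    0 ≤ TVa f :=
  Finset.sum_nonneg fun p _ => add_nonneg (abs_nonneg _) (abs_nonneg _)

lemma l2norm_add_le {N M : ℕ} [NeZero N] [NeZero M] (u v : ZMod N × ZMod M → ℝ) :
    l2norm (u + v) ≤ l2norm u + l2norm v := by
  rw [l2norm_eq, l2norm_eq, l2norm_eq]
  exact norm_add_le ((WithLp.equiv 2 (ZMod N × ZMod M → ℝ)).symm u)
    ((WithLp.equiv 2 (ZMod N × ZMod M → ℝ)).symm v)

lemma l2norm_smul {N M : ℕ} [NeZero N] [NeZero M] (c : ℝ) (u : ZMod N × ZMod M → ℝ) :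
    l2norm (fun p => c * u p) = |c| * l2norm u := by
  unfold l2norm
  rw [← Real.sqrt_sq_eq_abs, ← Real.sqrt_mul (sq_nonneg c), Finset.mul_sum]
  congr 1
  exact Finset.sum_congr rfl fun p _ => mul_pow c (u p) 2

lemma conv_smul {N M : ℕ} [NeZero N] [NeZero M] (h : ZMod N × ZMod M → ℝ) (c : ℝ)
    (z : ZMod N × ZMod M → ℝ) :
    conv h (fun p => c * z p) = fun p => c * conv h z p := by
  funext p
  unfold conv
  rw [Finset.mul_sum]
  exact Finset.sum_congr rfl fun q _ => by ring

lemma conv_add {N M : ℕ} [NeZero N] [NeZero M] (h z w : ZMod N × ZMod M → ℝ) :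
    conv h (z + w) = conv h z + conv h w := by
  funext p
  simp [conv, mul_add, Finset.sum_add_distrib]

lemma TVa_smul {N M : ℕ} [NeZero N] [NeZero M] (c : ℝ) (z : ZMod N × ZMod M → ℝ) :
    TVa (fun p => c * z p) = |c| * TVa z := by
  unfold TVa gradX gradY
  rw [Finset.mul_sum]
  refine Finset.sum_congr rfl fun p _ => ?_
  rw [← mul_sub, ← mul_sub, abs_mul, abs_mul, mul_add]

lemma TVa_add_le {N M : ℕ} [NeZero N] [NeZero M] (z w : ZMod N × ZMod M → ℝ) :
    TVa (z + w) ≤ TVa z + TVa w := by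
  unfold TVa
  rw [← Finset.sum_add_distrib]
  refine Finset.sum_le_sum fun p _ => ?_
  have hx : |gradX (z + w) p| ≤ |gradX z p| + |gradX w p| := by
    unfold gradX
    simp only [Pi.add_apply]
    have : z p + w p - (z (p.1 - 1, p.2) + w (p.1 - 1, p.2)) =
        (z p - z (p.1 - 1, p.2)) + (w p - w (p.1 - 1, p.2)) := by ring
    rw [this]; exact abs_add_le _ _
  have hy : |gradY (z + w) p| ≤ |gradY z p| + |gradY w p| := by
    unfold gradY
    simp only [Pi.add_apply]
    have : z p + w p - (z (p.1, p.2 - 1) + w (p.1, p.2 - 1)) =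
        (z p - z (p.1, p.2 - 1)) + (w p - w (p.1, p.2 - 1)) := by ring
    rw [this]; exact abs_add_le _ _
  linarith

lemma TVa_eq_zero_const {N M : ℕ} [NeZero N] [NeZero M] {z : ZMod N × ZMod M → ℝ}
    (hz : TVa z = 0) : ∀ p : ZMod N × ZMod M, z p = z 0 := by
  have hterm : ∀ p : ZMod N × ZMod M, |gradX z p| + |gradY z p| = 0 := by
    intro p
    have := (Finset.sum_eq_zero_iff_of_nonneg
      (fun q _ => add_nonneg (abs_nonneg _) (abs_nonneg _))).mp hz p (Finset.mem_univ p)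
    exact this
  have hX : ∀ p : ZMod N × ZMod M, z (p.1 - 1, p.2) = z p := by
    intro p
    have h1 : |gradX z p| = 0 := by
      have := hterm p; have := abs_nonneg (gradX z p); have := abs_nonneg (gradY z p); linarith
    have := abs_eq_zero.mp h1
    unfold gradX at this; linarith [sub_eq_zero.mp this]
  have hY : ∀ p : ZMod N × ZMod M, z (p.1, p.2 - 1) = z p := by
    intro p
    have h1 : |gradY z p| = 0 := by
      have := hterm p; have := abs_nonneg (gradX z p); have := abs_nonneg (gradY z p); linarith
    have := abs_eq_zero.mp h1
    unfold gradY at this; linarith [sub_eq_zero.mp this]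
  have stepX : ∀ (k : ℕ) (n : ZMod N) (m : ZMod M), z (n - (k : ZMod N), m) = z (n, m) := by
    intro k
    induction k with
    | zero => simp
    | succ k ih =>
      intro n m
      have : (n - ((k+1 : ℕ) : ZMod N)) = (n - (k : ZMod N)) - 1 := by push_cast; ring
      rw [this]
      have := hX (n - (k : ZMod N), m)
      simp only at this
      rw [this]; exact ih n m
  have stepY : ∀ (k : ℕ) (n : ZMod N) (m : ZMod M), z (n, m - (k : ZMod M)) = z (n, m) := by
    intro k
    induction k with
    | zero => simp
    | succ k ih =>
      intro n m
      have : (m - ((k+1 : ℕ) : ZMod M)) = (m - (k : ZMod M)) - 1 := by push_cast; ring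
      rw [this]
      have := hY (n, m - (k : ZMod M))
      simp only at this
      rw [this]; exact ih n m
  intro p
  obtain ⟨n, m⟩ := p
  have h1 : z (n, m) = z (0, m) := by
    have := stepX n.val n m
    simp [ZMod.natCast_val, ZMod.cast_id] at this
    simpa using this.symm
  have h2 : z (0, m) = z (0, 0) := by
    have := stepY m.val 0 m
    simp [ZMod.natCast_val, ZMod.cast_id] at this
    simpa using this.symm
  rw [h1, h2]; rfl

theorem stmt16 {N M : ℕ} [NeZero N] [NeZero M] (h : ZMod N × ZMod M → ℝ)
    (hmean : ∑ p : ZMod N × ZMod M, h p = 1) (lam : ℝ) (hlam : 0 < lam) :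
    (∀ z : ZMod N × ZMod M → ℝ, 0 ≤ l2norm (conv h z) + lam * TVa z) ∧
    (∀ z : ZMod N × ZMod M → ℝ, l2norm (conv h z) + lam * TVa z = 0 ↔ z = 0) ∧
    (∀ (c : ℝ) (z : ZMod N × ZMod M → ℝ),
      l2norm (conv h fun p => c * z p) + lam * TVa (fun p => c * z p) =
        |c| * (l2norm (conv h z) + lam * TVa z)) ∧
    (∀ z w : ZMod N × ZMod M → ℝ,
      l2norm (conv h (z + w)) + lam * TVa (z + w) ≤
        (l2norm (conv h z) + lam * TVa z) + (l2norm (conv h w) + lam * TVa w)) := by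
  refine ⟨fun z => add_nonneg (l2norm_nonneg _) (mul_nonneg hlam.le (TVa_nonneg _)), ?_, ?_, ?_⟩
  · intro z
    constructor
    · intro heq
      have htv : TVa z = 0 := by
        have h1 := l2norm_nonneg (conv h z)
        have h2 := TVa_nonneg z
        nlinarith
      have hconst := TVa_eq_zero_const htv
      have hconv : ∀ p, conv h z p = z 0 := by
        intro p
        unfold conv
        calc ∑ q : ZMod N × ZMod M, h q * z (p - q)
            = ∑ q : ZMod N × ZMod M, h q * z 0 := by
              exact Finset.sum_congr rfl fun q _ => by rw [hconst (p - q)]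
          _ = z 0 := by rw [← Finset.sum_mul, hmean, one_mul]
      have hl2 : l2norm (conv h z) = 0 := by
        have h2 := TVa_nonneg z
        have h1 := l2norm_nonneg (conv h z)
        nlinarith
      have hsum : ∑ p : ZMod N × ZMod M, (conv h z p) ^ 2 = 0 := by
        have hle := Real.sqrt_eq_zero'.mp hl2
        exact le_antisymm hle (Finset.sum_nonneg fun p _ => sq_nonneg _)
      have hz0 : z 0 = 0 := by
        have := (Finset.sum_eq_zero_iff_of_nonneg
          (fun p _ => sq_nonneg (conv h z p))).mp hsum 0 (Finset.mem_univ 0)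
        have h0 : conv h z 0 = z 0 := hconv 0
        nlinarith [this]
      funext p
      rw [hconst p, hz0]; rfl
    · intro hz
      subst hz
      have : conv h (0 : ZMod N × ZMod M → ℝ) = 0 := by
        funext p; simp [conv]
      rw [this]
      have : TVa (0 : ZMod N × ZMod M → ℝ) = 0 := by
        simp [TVa, gradX, gradY]
      rw [this]
      simp [l2norm]
  · intro c z
    rw [conv_smul, l2norm_smul, TVa_smul]
    ring
  · intro z w
    rw [conv_add]
    have h1 := l2norm_add_le (conv h z) (conv h w)
    have h2 := TVa_add_le z w
    nlinarith [hlam.le]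
end
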